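/- Let L be a real m×n matrix whose associated linear map x ↦ L x is injective, and let H be an n×n real symmetric positive semidefinite matrix. Then LᵀL is invertible, the matrix I + (LᵀL)⁻¹H is invertible, and the m×m matrix W := L·(I + (LᵀL)⁻¹H)⁻¹·(LᵀL)⁻¹·Lᵀ is firmly nonexpansive as a linear map: for every x ∈ ℝᵐ, ‖W x‖² ≤ ⟨W x, x⟩ (Euclidean dot product). -/

import Mathlib

open Matrix

/-- Firm nonexpansiveness of the matrix `W = L (I + (LᵀL)⁻¹H)⁻¹ (LᵀL)⁻¹ Lᵀ` appearing in
the linearized ADMM iteration, for `L` injective and `H` symmetric positive semidefinite. -/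
theorem ADMM_matrix_firmly_nonexpansive {m n : ℕ}
    (L : Matrix (Fin m) (Fin n) ℝ) (hL : Function.Injective fun x : Fin n → ℝ => L *ᵥ x)
    (H : Matrix (Fin n) (Fin n) ℝ) (hH : H.PosSemidef) :
    IsUnit (Lᵀ * L) ∧
      IsUnit (1 + (Lᵀ * L)⁻¹ * H) ∧
      ∀ x : Fin m → ℝ,
        ((L * (1 + (Lᵀ * L)⁻¹ * H)⁻¹ * (Lᵀ * L)⁻¹ * Lᵀ) *ᵥ x) ⬝ᵥ
            ((L * (1 + (Lᵀ * L)⁻¹ * H)⁻¹ * (Lᵀ * L)⁻¹ * Lᵀ) *ᵥ x) ≤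
          ((L * (1 + (Lᵀ * L)⁻¹ * H)⁻¹ * (Lᵀ * L)⁻¹ * Lᵀ) *ᵥ x) ⬝ᵥ x := by
  have hGps : (Lᵀ * L).PosSemidef := by
    simpa using Matrix.posSemidef_conjTranspose_mul_self (R := ℝ) L
  have hG : (Lᵀ * L).PosDef := by
    refine Matrix.PosDef.of_dotProduct_mulVec_pos hGps.isHermitian fun x hx => ?_
    have hLx : L *ᵥ x ≠ 0 := fun h => hx (by simpa using hL (a₁ := x) (a₂ := 0) (by simpa using h))
    have hpos : (0:ℝ) < (L *ᵥ x) ⬝ᵥ (L *ᵥ x) := by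
      have := Matrix.dotProduct_star_self_pos_iff (v := L *ᵥ x)
      simpa [hLx] using this.2 hLx
    calc (0:ℝ) < (L *ᵥ x) ⬝ᵥ (L *ᵥ x) := hpos
      _ = star x ⬝ᵥ ((Lᵀ * L) *ᵥ x) := by
          rw [dotProduct_comm, dotProduct_mulVec, ← mulVec_transpose, ← mulVec_mulVec]
          simp [dotProduct_comm]
  have hGu : IsUnit (Lᵀ * L) := hG.isUnit
  have hGdet : IsUnit (Lᵀ * L).det := (isUnit_iff_isUnit_det _).1 hGu
  have hS : (Lᵀ * L + H).PosDef := hG.add_posSemidef hH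
  have hSu : IsUnit (Lᵀ * L + H) := hS.isUnit
  have hSdet : IsUnit (Lᵀ * L + H).det := (isUnit_iff_isUnit_det _).1 hSu
  have key : 1 + (Lᵀ * L)⁻¹ * H = (Lᵀ * L)⁻¹ * (Lᵀ * L + H) := by
    rw [mul_add, Matrix.nonsing_inv_mul _ hGdet]
  have hUu : IsUnit (1 + (Lᵀ * L)⁻¹ * H) := by
    rw [key]
    exact (Matrix.isUnit_nonsing_inv_iff.2 hGu).mul hSu
  refine ⟨hGu, hUu, fun x => ?_⟩
  have invkey : (1 + (Lᵀ * L)⁻¹ * H)⁻¹ * (Lᵀ * L)⁻¹ = (Lᵀ * L + H)⁻¹ := by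
    rw [key, Matrix.mul_inv_rev, Matrix.nonsing_inv_nonsing_inv _ hGdet, mul_assoc,
      Matrix.mul_nonsing_inv _ hGdet, mul_one]
  have hW : L * (1 + (Lᵀ * L)⁻¹ * H)⁻¹ * (Lᵀ * L)⁻¹ * Lᵀ = L * (Lᵀ * L + H)⁻¹ * Lᵀ := by
    rw [Matrix.mul_assoc L, invkey]
  rw [hW]
  set v : Fin n → ℝ := (Lᵀ * L + H)⁻¹ *ᵥ (Lᵀ *ᵥ x) with hv
  have hWx : (L * (Lᵀ * L + H)⁻¹ * Lᵀ) *ᵥ x = L *ᵥ v := by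
    rw [hv, mulVec_mulVec, mulVec_mulVec]
  have hSv : (Lᵀ * L + H) *ᵥ v = Lᵀ *ᵥ x := by
    rw [hv, mulVec_mulVec, Matrix.mul_nonsing_inv _ hSdet, one_mulVec]
  have hLHS : (L *ᵥ v) ⬝ᵥ (L *ᵥ v) = v ⬝ᵥ ((Lᵀ * L) *ᵥ v) := by
    rw [dotProduct_comm, dotProduct_mulVec, ← mulVec_transpose, ← mulVec_mulVec,
      dotProduct_comm]
  have hRHS : (L *ᵥ v) ⬝ᵥ x = v ⬝ᵥ ((Lᵀ * L) *ᵥ v) + v ⬝ᵥ (H *ᵥ v) := by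
    rw [dotProduct_comm, dotProduct_mulVec, ← mulVec_transpose, dotProduct_comm, hSv.symm,
      add_mulVec, dotProduct_add]
  have hHnn : 0 ≤ v ⬝ᵥ (H *ᵥ v) := by simpa using hH.dotProduct_mulVec_nonneg v
  rw [hWx, hLHS, hRHS]
  linarith
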